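/- If X and Y are subsets of R^d such that conv(X) ∩ conv(Y) ≠ ∅, then there exist subsets S₁ ⊆ X and S₂ ⊆ Y with |S₁| + |S₂| ≤ d + 2 such that conv(S₁) ∩ conv(S₂) ≠ ∅. -/
import Mathlib

open scoped RealInnerProductSpace

theorem symmetric_caratheodory (d : ℕ) (X Y : Set (EuclideanSpace ℝ (Fin d)))
    (h : (convexHull ℝ X ∩ convexHull ℝ Y).Nonempty) :
    ∃ S₁ S₂ : Finset (EuclideanSpace ℝ (Fin d)),
      ↑S₁ ⊆ X ∧ ↑S₂ ⊆ Y ∧ S₁.card + S₂.card ≤ d + 2 ∧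
      (convexHull ℝ (S₁ : Set (EuclideanSpace ℝ (Fin d))) ∩
        convexHull ℝ (S₂ : Set (EuclideanSpace ℝ (Fin d)))).Nonempty := by
  classical
  obtain ⟨p, hpX, hpY⟩ := h
  let f : EuclideanSpace ℝ (Fin d) →ᵃ[ℝ] EuclideanSpace ℝ (Fin d) × ℝ :=
    ⟨fun x => (x, 1), LinearMap.prod LinearMap.id 0, fun p v => by simp [Prod.ext_iff]⟩
  let g : EuclideanSpace ℝ (Fin d) →ᵃ[ℝ] EuclideanSpace ℝ (Fin d) × ℝ :=
    ⟨fun y => (-y, -1), LinearMap.prod (-LinearMap.id) 0, fun p v => by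
      simp [Prod.ext_iff]; abel⟩
  set A : Set (EuclideanSpace ℝ (Fin d) × ℝ) := f '' X ∪ g '' Y with hA
  have h1 : (p, (1:ℝ)) ∈ convexHull ℝ A := by
    apply convexHull_mono Set.subset_union_left
    rw [← AffineMap.image_convexHull]
    exact ⟨p, hpX, rfl⟩
  have h2 : (-p, (-1:ℝ)) ∈ convexHull ℝ A := by
    apply convexHull_mono Set.subset_union_right
    rw [← AffineMap.image_convexHull]
    exact ⟨p, hpY, rfl⟩
  have h0 : (0 : EuclideanSpace ℝ (Fin d) × ℝ) ∈ convexHull ℝ A := by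
    have := (convex_convexHull ℝ A) h1 h2 (by norm_num : (0:ℝ) ≤ 1/2)
      (by norm_num : (0:ℝ) ≤ 1/2) (by norm_num)
    convert this using 1
    rw [Prod.ext_iff]
    constructor
    · ext i; simp
    · simp
  rw [convexHull_eq_union] at h0
  simp only [Set.mem_iUnion, exists_prop] at h0
  obtain ⟨t, htA, hai, h0t⟩ := h0
  -- cardinality bound
  have hcard : t.card ≤ d + 2 := by
    have h1 := hai.card_le_finrank_succ
    rw [Fintype.card_coe] at h1
    have h2 := Submodule.finrank_le
      (vectorSpan ℝ (Set.range (Subtype.val : t → EuclideanSpace ℝ (Fin d) × ℝ)))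
    have h3 : Module.finrank ℝ (EuclideanSpace ℝ (Fin d) × ℝ) = d + 1 := by
      simp [Module.finrank_prod, finrank_euclideanSpace_fin]
    omega
  -- weights
  rw [Finset.convexHull_eq] at h0t
  obtain ⟨w, hw0, hw1, hwc⟩ := h0t
  rw [Finset.centerMass_eq_of_sum_1 _ _ hw1] at hwc
  simp only [id] at hwc
  -- structure of elements of t
  have hmem : ∀ v ∈ t, (v.2 = 1 ∧ v.1 ∈ X) ∨ (v.2 = -1 ∧ -v.1 ∈ Y) := by
    intro v hv
    rcases htA hv with ⟨x, hx, rfl⟩ | ⟨y, hy, rfl⟩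
    · exact Or.inl ⟨rfl, hx⟩
    · exact Or.inr ⟨rfl, by simpa [g] using hy⟩
  set t₁ := t.filter (fun v => v.2 = 1) with ht₁
  set t₂ := t.filter (fun v => ¬ v.2 = 1) with ht₂
  have ht₂mem : ∀ v ∈ t₂, v.2 = -1 ∧ -v.1 ∈ Y := by
    intro v hv
    rw [ht₂, Finset.mem_filter] at hv
    rcases hmem v hv.1 with h | h
    · exact absurd h.1 hv.2
    · exact h
  have ht₁mem : ∀ v ∈ t₁, v.2 = 1 ∧ v.1 ∈ X := by
    intro v hv
    rw [ht₁, Finset.mem_filter] at hv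
    rcases hmem v hv.1 with h | h
    · exact h
    · exact absurd (hv.2.symm.trans h.1) (by norm_num)
  -- second coordinate
  have e1 : ∑ v ∈ t₁, w v * v.2 = ∑ v ∈ t₁, w v :=
    Finset.sum_congr rfl (fun v hv => by rw [(ht₁mem v hv).1, mul_one])
  have e2 : ∑ v ∈ t₂, w v * v.2 = -∑ v ∈ t₂, w v := by
    rw [← Finset.sum_neg_distrib]
    exact Finset.sum_congr rfl (fun v hv => by rw [(ht₂mem v hv).1]; ring)
  have hsplit : ∑ v ∈ t₁, (w v * v.2) + ∑ v ∈ t₂, (w v * v.2) = 0 := by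
    have hs := congrArg Prod.snd hwc
    rw [Prod.snd_sum] at hs
    simp only [Prod.smul_snd, smul_eq_mul, Prod.snd_zero] at hs
    rw [ht₁, ht₂, Finset.sum_filter_add_sum_filter_not]
    exact hs
  have hsum12 : ∑ v ∈ t₁, w v + ∑ v ∈ t₂, w v = 1 := by
    rw [ht₁, ht₂, Finset.sum_filter_add_sum_filter_not, hw1]
  have ha : ∑ v ∈ t₁, w v = 1/2 := by linarith
  have hb : ∑ v ∈ t₂, w v = 1/2 := by linarith
  -- first coordinate
  have hfst : ∑ v ∈ t₁, w v • v.1 + ∑ v ∈ t₂, w v • v.1 = 0 := by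
    have hs := congrArg Prod.fst hwc
    rw [Prod.fst_sum] at hs
    simp only [Prod.smul_fst, Prod.fst_zero] at hs
    rw [ht₁, ht₂, Finset.sum_filter_add_sum_filter_not]
    exact hs
  refine ⟨t₁.image Prod.fst, t₂.image (fun v => -v.1), ?_, ?_, ?_, ?_⟩
  · intro x hx
    obtain ⟨v, hv, rfl⟩ := Finset.mem_image.mp (Finset.mem_coe.mp hx)
    exact (ht₁mem v hv).2
  · intro y hy
    obtain ⟨v, hv, rfl⟩ := Finset.mem_image.mp (Finset.mem_coe.mp hy)
    exact (ht₂mem v hv).2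
  · calc (t₁.image Prod.fst).card + (t₂.image (fun v => -v.1)).card
        ≤ t₁.card + t₂.card := Nat.add_le_add Finset.card_image_le Finset.card_image_le
      _ = t.card := Finset.card_filter_add_card_filter_not _
      _ ≤ d + 2 := hcard
  · refine ⟨t₁.centerMass w Prod.fst, ?_, ?_⟩
    · exact Finset.centerMass_mem_convexHull _
        (fun v hv => hw0 v (Finset.filter_subset _ _ hv))
        (by rw [ha]; norm_num)
        (fun v hv => Finset.mem_coe.mpr (Finset.mem_image_of_mem _ hv))
    · have heq : t₁.centerMass w Prod.fst = t₂.centerMass w (fun v => -v.1) := by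
        rw [Finset.centerMass, Finset.centerMass, ha, hb]
        congr 1
        have e3 : ∑ v ∈ t₂, w v • -v.1 = - ∑ v ∈ t₂, w v • v.1 := by
          rw [← Finset.sum_neg_distrib]
          exact Finset.sum_congr rfl (fun v _ => by rw [smul_neg])
        rw [e3]
        linear_combination (norm := module) hfst
      rw [heq]
      exact Finset.centerMass_mem_convexHull _
        (fun v hv => hw0 v (Finset.filter_subset _ _ hv))
        (by rw [hb]; norm_num)
        (fun v hv => Finset.mem_coe.mpr (Finset.mem_image_of_mem _ hv))
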